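/- Consider the real Lie algebra 𝔤 of all complex 2×2 matrices under the commutator bracket (𝔤 ≅ 2ℝ ⊕ sl(2,ℂ) as a real Lie algebra), with ℝ-basis Z = I₂ (the identity matrix), X = E₁₂ − E₂₁, Y = E₁₂ + E₂₁, W = E₁₁ − E₂₂, U = iZ, V = iX, S = iY, T = iW. Define ℝ-linear maps J₂, J₃ on 𝔤 by J₃: Z ↦ X, X ↦ −Z, Y ↦ W, W ↦ −Y, U ↦ V, V ↦ −U, S ↦ T, T ↦ −S and J₂: Z ↦ W, W ↦ Z, X ↦ Y, Y ↦ X, U ↦ T, T ↦ U, V ↦ S, S ↦ V, and set J₁ := J₃J₂. Then (J₁, J₂, J₃) satisfies the paraquaternionic identities (J₁² = J₂² = id, J₃² = −id, J₁J₂ = −J₂J₁ = J₃), all three Nijenhuis tensors vanish (N_{J₁} = N_{J₂} = N_{J₃} = 0), and the symmetric bilinear form g making the basis orthogonal with g(Z,Z) = g(X,X) = g(U,U) = g(V,V) = 1 and g(Y,Y) = g(W,W) = g(S,S) = g(T,T) = −1 is hyper-parahermitian: g(J₁A, J₁B) = g(J₂A, J₂B) = −g(A,B) and g(J₃A, J₃B)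 = g(A,B) for all A, B ∈ 𝔤. -/

import Mathlib

open Matrix

attribute [local instance 100] LieRing.ofAssociativeRing

/-- `E j k`: the complex 2×2 matrix with 1 in row `j`, column `k`, and 0 elsewhere. -/
noncomputable def Em (j k : Fin 2) : Matrix (Fin 2) (Fin 2) ℂ := Matrix.single j k 1

/-- The real Lie algebra `𝔤` of all complex 2×2 matrices (`≅ 2ℝ ⊕ sl(2,ℂ)`) with its basis. -/
noncomputable def Zm : Matrix (Fin 2) (Fin 2) ℂ := 1
noncomputable def Xm : Matrix (Fin 2) (Fin 2) ℂ := Em 0 1 - Em 1 0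
noncomputable def Ym : Matrix (Fin 2) (Fin 2) ℂ := Em 0 1 + Em 1 0
noncomputable def Wm : Matrix (Fin 2) (Fin 2) ℂ := Em 0 0 - Em 1 1
noncomputable def Um : Matrix (Fin 2) (Fin 2) ℂ := Complex.I • Zm
noncomputable def Vm : Matrix (Fin 2) (Fin 2) ℂ := Complex.I • Xm
noncomputable def Sm : Matrix (Fin 2) (Fin 2) ℂ := Complex.I • Ym
noncomputable def Tm : Matrix (Fin 2) (Fin 2) ℂ := Complex.I • Wm

/-- The basis listed so that the signature is `(1,1,1,1,−1,−1,−1,−1)`. -/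
noncomputable def e : Fin 8 → Matrix (Fin 2) (Fin 2) ℂ := ![Zm, Xm, Um, Vm, Ym, Wm, Sm, Tm]

/-- The signs `g(eᵢ,eᵢ)`. -/
noncomputable def eps : Fin 8 → ℝ := ![1, 1, 1, 1, -1, -1, -1, -1]

/-- The Nijenhuis tensor of an `ℝ`-linear endomorphism `J` of a real Lie algebra:
`N_J(x,y) = [Jx,Jy] + J²[x,y] − J[Jx,y] − J[x,Jy]` (here the Lie bracket of matrices is
the commutator). -/
def nijenhuis {L : Type*} [LieRing L] [LieAlgebra ℝ L] (J : L →ₗ[ℝ] L) (x y : L) : L :=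
  ⁅J x, J y⁆ + J (J ⁅x, y⁆) - J ⁅J x, y⁆ - J ⁅x, J y⁆

/-- On the real Lie algebra of all complex 2×2 matrices with basis `Z = I₂, X, Y, W, U, V,
S, T`, the maps `J₂, J₃` defined on the basis as stated, together with `J₁ := J₃J₂`,
satisfy the paraquaternionic identities, have vanishing Nijenhuis tensors, and the neutral
metric `g` with `g(Z,Z) = g(X,X) = g(U,U) = g(V,V) = 1`,
`g(Y,Y) = g(W,W) = g(S,S) = g(T,T) = −1` is hyper-parahermitian. -/

lemma erepr (A : Matrix (Fin 2) (Fin 2) ℂ) :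
    A = (((A 0 0).re + (A 1 1).re)/2) • Zm + (((A 0 1).re - (A 1 0).re)/2) • Xm
      + (((A 0 0).im + (A 1 1).im)/2) • Um + (((A 0 1).im - (A 1 0).im)/2) • Vm
      + (((A 0 1).re + (A 1 0).re)/2) • Ym + (((A 0 0).re - (A 1 1).re)/2) • Wm
      + (((A 0 1).im + (A 1 0).im)/2) • Sm + (((A 0 0).im - (A 1 1).im)/2) • Tm := by
  ext i j
  fin_cases i <;> fin_cases j <;>
    simp [Zm, Xm, Ym, Wm, Um, Vm, Sm, Tm, Em, Matrix.single, Matrix.one_apply,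
      Complex.ext_iff] <;> ring_nf <;> simp

lemma lZl (A : Matrix (Fin 2) (Fin 2) ℂ) : ⁅Zm, A⁆ = 0 := by simp [Ring.lie_def, Zm]
lemma lZr (A : Matrix (Fin 2) (Fin 2) ℂ) : ⁅A, Zm⁆ = 0 := by simp [Ring.lie_def, Zm]
lemma lUl (A : Matrix (Fin 2) (Fin 2) ℂ) : ⁅Um, A⁆ = 0 := by
  simp [Ring.lie_def, Um, Zm, smul_mul_assoc, mul_smul_comm]
lemma lUr (A : Matrix (Fin 2) (Fin 2) ℂ) : ⁅A, Um⁆ = 0 := by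
  simp [Ring.lie_def, Um, Zm, smul_mul_assoc, mul_smul_comm]

lemma lXY : ⁅Xm, Ym⁆ = (2:ℝ) • Wm := by
  ext i j
  fin_cases i <;> fin_cases j <;>
    simp [Ring.lie_def, Xm, Ym, Wm, Vm, Sm, Tm, Em, Matrix.mul_apply, Fin.sum_univ_two,
      Matrix.single, Complex.ext_iff] <;> norm_num

lemma lXW : ⁅Xm, Wm⁆ = (-2:ℝ) • Ym := by
  ext i j
  fin_cases i <;> fin_cases j <;>
    simp [Ring.lie_def, Xm, Ym, Wm, Vm, Sm, Tm, Em, Matrix.mul_apply, Fin.sum_univ_two,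
      Matrix.single, Complex.ext_iff] <;> norm_num

lemma lXV : ⁅Xm, Vm⁆ = (0 : Matrix (Fin 2) (Fin 2) ℂ) := by
  ext i j
  fin_cases i <;> fin_cases j <;>
    simp [Ring.lie_def, Xm, Ym, Wm, Vm, Sm, Tm, Em, Matrix.mul_apply, Fin.sum_univ_two,
      Matrix.single, Complex.ext_iff] <;> norm_num

lemma lXS : ⁅Xm, Sm⁆ = (2:ℝ) • Tm := by
  ext i j
  fin_cases i <;> fin_cases j <;>
    simp [Ring.lie_def, Xm, Ym, Wm, Vm, Sm, Tm, Em, Matrix.mul_apply, Fin.sum_univ_two,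
      Matrix.single, Complex.ext_iff] <;> norm_num

lemma lXT : ⁅Xm, Tm⁆ = (-2:ℝ) • Sm := by
  ext i j
  fin_cases i <;> fin_cases j <;>
    simp [Ring.lie_def, Xm, Ym, Wm, Vm, Sm, Tm, Em, Matrix.mul_apply, Fin.sum_univ_two,
      Matrix.single, Complex.ext_iff] <;> norm_num

lemma lYX : ⁅Ym, Xm⁆ = (-2:ℝ) • Wm := by
  ext i j
  fin_cases i <;> fin_cases j <;>
    simp [Ring.lie_def, Xm, Ym, Wm, Vm, Sm, Tm, Em, Matrix.mul_apply, Fin.sum_univ_two,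
      Matrix.single, Complex.ext_iff] <;> norm_num

lemma lYW : ⁅Ym, Wm⁆ = (-2:ℝ) • Xm := by
  ext i j
  fin_cases i <;> fin_cases j <;>
    simp [Ring.lie_def, Xm, Ym, Wm, Vm, Sm, Tm, Em, Matrix.mul_apply, Fin.sum_univ_two,
      Matrix.single, Complex.ext_iff] <;> norm_num

lemma lYV : ⁅Ym, Vm⁆ = (-2:ℝ) • Tm := by
  ext i j
  fin_cases i <;> fin_cases j <;>
    simp [Ring.lie_def, Xm, Ym, Wm, Vm, Sm, Tm, Em, Matrix.mul_apply, Fin.sum_univ_two,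
      Matrix.single, Complex.ext_iff] <;> norm_num

lemma lYS : ⁅Ym, Sm⁆ = (0 : Matrix (Fin 2) (Fin 2) ℂ) := by
  ext i j
  fin_cases i <;> fin_cases j <;>
    simp [Ring.lie_def, Xm, Ym, Wm, Vm, Sm, Tm, Em, Matrix.mul_apply, Fin.sum_univ_two,
      Matrix.single, Complex.ext_iff] <;> norm_num

lemma lYT : ⁅Ym, Tm⁆ = (-2:ℝ) • Vm := by
  ext i j
  fin_cases i <;> fin_cases j <;>
    simp [Ring.lie_def, Xm, Ym, Wm, Vm, Sm, Tm, Em, Matrix.mul_apply, Fin.sum_univ_two,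
      Matrix.single, Complex.ext_iff] <;> norm_num

lemma lWX : ⁅Wm, Xm⁆ = (2:ℝ) • Ym := by
  ext i j
  fin_cases i <;> fin_cases j <;>
    simp [Ring.lie_def, Xm, Ym, Wm, Vm, Sm, Tm, Em, Matrix.mul_apply, Fin.sum_univ_two,
      Matrix.single, Complex.ext_iff] <;> norm_num

lemma lWY : ⁅Wm, Ym⁆ = (2:ℝ) • Xm := by
  ext i j
  fin_cases i <;> fin_cases j <;>
    simp [Ring.lie_def, Xm, Ym, Wm, Vm, Sm, Tm, Em, Matrix.mul_apply, Fin.sum_univ_two,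
      Matrix.single, Complex.ext_iff] <;> norm_num

lemma lWV : ⁅Wm, Vm⁆ = (2:ℝ) • Sm := by
  ext i j
  fin_cases i <;> fin_cases j <;>
    simp [Ring.lie_def, Xm, Ym, Wm, Vm, Sm, Tm, Em, Matrix.mul_apply, Fin.sum_univ_two,
      Matrix.single, Complex.ext_iff] <;> norm_num

lemma lWS : ⁅Wm, Sm⁆ = (2:ℝ) • Vm := by
  ext i j
  fin_cases i <;> fin_cases j <;>
    simp [Ring.lie_def, Xm, Ym, Wm, Vm, Sm, Tm, Em, Matrix.mul_apply, Fin.sum_univ_two,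
      Matrix.single, Complex.ext_iff] <;> norm_num

lemma lWT : ⁅Wm, Tm⁆ = (0 : Matrix (Fin 2) (Fin 2) ℂ) := by
  ext i j
  fin_cases i <;> fin_cases j <;>
    simp [Ring.lie_def, Xm, Ym, Wm, Vm, Sm, Tm, Em, Matrix.mul_apply, Fin.sum_univ_two,
      Matrix.single, Complex.ext_iff] <;> norm_num

lemma lVX : ⁅Vm, Xm⁆ = (0 : Matrix (Fin 2) (Fin 2) ℂ) := by
  ext i j
  fin_cases i <;> fin_cases j <;>
    simp [Ring.lie_def, Xm, Ym, Wm, Vm, Sm, Tm, Em, Matrix.mul_apply, Fin.sum_univ_two,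
      Matrix.single, Complex.ext_iff] <;> norm_num

lemma lVY : ⁅Vm, Ym⁆ = (2:ℝ) • Tm := by
  ext i j
  fin_cases i <;> fin_cases j <;>
    simp [Ring.lie_def, Xm, Ym, Wm, Vm, Sm, Tm, Em, Matrix.mul_apply, Fin.sum_univ_two,
      Matrix.single, Complex.ext_iff] <;> norm_num

lemma lVW : ⁅Vm, Wm⁆ = (-2:ℝ) • Sm := by
  ext i j
  fin_cases i <;> fin_cases j <;>
    simp [Ring.lie_def, Xm, Ym, Wm, Vm, Sm, Tm, Em, Matrix.mul_apply, Fin.sum_univ_two,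
      Matrix.single, Complex.ext_iff] <;> norm_num

lemma lVS : ⁅Vm, Sm⁆ = (-2:ℝ) • Wm := by
  ext i j
  fin_cases i <;> fin_cases j <;>
    simp [Ring.lie_def, Xm, Ym, Wm, Vm, Sm, Tm, Em, Matrix.mul_apply, Fin.sum_univ_two,
      Matrix.single, Complex.ext_iff] <;> norm_num

lemma lVT : ⁅Vm, Tm⁆ = (2:ℝ) • Ym := by
  ext i j
  fin_cases i <;> fin_cases j <;>
    simp [Ring.lie_def, Xm, Ym, Wm, Vm, Sm, Tm, Em, Matrix.mul_apply, Fin.sum_univ_two,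
      Matrix.single, Complex.ext_iff] <;> norm_num

lemma lSX : ⁅Sm, Xm⁆ = (-2:ℝ) • Tm := by
  ext i j
  fin_cases i <;> fin_cases j <;>
    simp [Ring.lie_def, Xm, Ym, Wm, Vm, Sm, Tm, Em, Matrix.mul_apply, Fin.sum_univ_two,
      Matrix.single, Complex.ext_iff] <;> norm_num

lemma lSY : ⁅Sm, Ym⁆ = (0 : Matrix (Fin 2) (Fin 2) ℂ) := by
  ext i j
  fin_cases i <;> fin_cases j <;>
    simp [Ring.lie_def, Xm, Ym, Wm, Vm, Sm, Tm, Em, Matrix.mul_apply, Fin.sum_univ_two,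
      Matrix.single, Complex.ext_iff] <;> norm_num

lemma lSW : ⁅Sm, Wm⁆ = (-2:ℝ) • Vm := by
  ext i j
  fin_cases i <;> fin_cases j <;>
    simp [Ring.lie_def, Xm, Ym, Wm, Vm, Sm, Tm, Em, Matrix.mul_apply, Fin.sum_univ_two,
      Matrix.single, Complex.ext_iff] <;> norm_num

lemma lSV : ⁅Sm, Vm⁆ = (2:ℝ) • Wm := by
  ext i j
  fin_cases i <;> fin_cases j <;>
    simp [Ring.lie_def, Xm, Ym, Wm, Vm, Sm, Tm, Em, Matrix.mul_apply, Fin.sum_univ_two,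
      Matrix.single, Complex.ext_iff] <;> norm_num

lemma lST : ⁅Sm, Tm⁆ = (2:ℝ) • Xm := by
  ext i j
  fin_cases i <;> fin_cases j <;>
    simp [Ring.lie_def, Xm, Ym, Wm, Vm, Sm, Tm, Em, Matrix.mul_apply, Fin.sum_univ_two,
      Matrix.single, Complex.ext_iff] <;> norm_num

lemma lTX : ⁅Tm, Xm⁆ = (2:ℝ) • Sm := by
  ext i j
  fin_cases i <;> fin_cases j <;>
    simp [Ring.lie_def, Xm, Ym, Wm, Vm, Sm, Tm, Em, Matrix.mul_apply, Fin.sum_univ_two,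
      Matrix.single, Complex.ext_iff] <;> norm_num

lemma lTY : ⁅Tm, Ym⁆ = (2:ℝ) • Vm := by
  ext i j
  fin_cases i <;> fin_cases j <;>
    simp [Ring.lie_def, Xm, Ym, Wm, Vm, Sm, Tm, Em, Matrix.mul_apply, Fin.sum_univ_two,
      Matrix.single, Complex.ext_iff] <;> norm_num

lemma lTW : ⁅Tm, Wm⁆ = (0 : Matrix (Fin 2) (Fin 2) ℂ) := by
  ext i j
  fin_cases i <;> fin_cases j <;>
    simp [Ring.lie_def, Xm, Ym, Wm, Vm, Sm, Tm, Em, Matrix.mul_apply, Fin.sum_univ_two,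
      Matrix.single, Complex.ext_iff] <;> norm_num

lemma lTV : ⁅Tm, Vm⁆ = (-2:ℝ) • Ym := by
  ext i j
  fin_cases i <;> fin_cases j <;>
    simp [Ring.lie_def, Xm, Ym, Wm, Vm, Sm, Tm, Em, Matrix.mul_apply, Fin.sum_univ_two,
      Matrix.single, Complex.ext_iff] <;> norm_num

lemma lTS : ⁅Tm, Sm⁆ = (-2:ℝ) • Xm := by
  ext i j
  fin_cases i <;> fin_cases j <;>
    simp [Ring.lie_def, Xm, Ym, Wm, Vm, Sm, Tm, Em, Matrix.mul_apply, Fin.sum_univ_two,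
      Matrix.single, Complex.ext_iff] <;> norm_num

lemma lXX : ⁅Xm, Xm⁆ = (0 : Matrix (Fin 2) (Fin 2) ℂ) := by
  ext i j
  fin_cases i <;> fin_cases j <;>
    simp [Ring.lie_def, Xm, Ym, Wm, Vm, Sm, Tm, Em, Matrix.mul_apply, Fin.sum_univ_two,
      Matrix.single, Complex.ext_iff] <;> norm_num

lemma lYY : ⁅Ym, Ym⁆ = (0 : Matrix (Fin 2) (Fin 2) ℂ) := by
  ext i j
  fin_cases i <;> fin_cases j <;>
    simp [Ring.lie_def, Xm, Ym, Wm, Vm, Sm, Tm, Em, Matrix.mul_apply, Fin.sum_univ_two,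
      Matrix.single, Complex.ext_iff] <;> norm_num

lemma lWW : ⁅Wm, Wm⁆ = (0 : Matrix (Fin 2) (Fin 2) ℂ) := by
  ext i j
  fin_cases i <;> fin_cases j <;>
    simp [Ring.lie_def, Xm, Ym, Wm, Vm, Sm, Tm, Em, Matrix.mul_apply, Fin.sum_univ_two,
      Matrix.single, Complex.ext_iff] <;> norm_num

lemma lVV : ⁅Vm, Vm⁆ = (0 : Matrix (Fin 2) (Fin 2) ℂ) := by
  ext i j
  fin_cases i <;> fin_cases j <;>
    simp [Ring.lie_def, Xm, Ym, Wm, Vm, Sm, Tm, Em, Matrix.mul_apply, Fin.sum_univ_two,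
      Matrix.single, Complex.ext_iff] <;> norm_num

lemma lSS : ⁅Sm, Sm⁆ = (0 : Matrix (Fin 2) (Fin 2) ℂ) := by
  ext i j
  fin_cases i <;> fin_cases j <;>
    simp [Ring.lie_def, Xm, Ym, Wm, Vm, Sm, Tm, Em, Matrix.mul_apply, Fin.sum_univ_two,
      Matrix.single, Complex.ext_iff] <;> norm_num

lemma lTT : ⁅Tm, Tm⁆ = (0 : Matrix (Fin 2) (Fin 2) ℂ) := by
  ext i j
  fin_cases i <;> fin_cases j <;>
    simp [Ring.lie_def, Xm, Ym, Wm, Vm, Sm, Tm, Em, Matrix.mul_apply, Fin.sum_univ_two,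
      Matrix.single, Complex.ext_iff] <;> norm_num


lemma e0 : e 0 = Zm := rfl
lemma e1 : e 1 = Xm := rfl
lemma e2 : e 2 = Um := rfl
lemma e3 : e 3 = Vm := rfl
lemma e4 : e 4 = Ym := rfl
lemma e5 : e 5 = Wm := rfl
lemma e6 : e 6 = Sm := rfl
lemma e7 : e 7 = Tm := rfl

lemma key1 {N : Type*} [AddCommGroup N] [Module ℝ N]
    (f : Matrix (Fin 2) (Fin 2) ℂ →ₗ[ℝ] N) (h : ∀ i : Fin 8, f (e i) = 0) :
    ∀ A, f A = 0 := by
  have hZ : f Zm = 0 := by simpa [e] using h 0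
  have hX : f Xm = 0 := by simpa [e] using h 1
  have hU : f Um = 0 := by simpa [e] using h 2
  have hV : f Vm = 0 := by simpa [e] using h 3
  have hY : f Ym = 0 := by simpa [e] using h 4
  have hW : f Wm = 0 := by simpa [e] using h 5
  have hS : f Sm = 0 := by simpa [e] using h 6
  have hT : f Tm = 0 := by simpa [e] using h 7
  intro A
  conv_lhs => rw [erepr A]
  simp [_root_.map_add, _root_.map_smul, hZ, hX, hU, hV, hY, hW, hS, hT]

lemma key2 {N : Type*} [AddCommGroup N] [Module ℝ N]
    (f : Matrix (Fin 2) (Fin 2) ℂ →ₗ[ℝ] Matrix (Fin 2) (Fin 2) ℂ →ₗ[ℝ] N)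
    (h : ∀ i j : Fin 8, f (e i) (e j) = 0) : ∀ A B, f A B = 0 := by
  have h1 : ∀ A, f A = 0 := key1 f (fun i => LinearMap.ext (key1 (f (e i)) (h i)))
  intro A B
  rw [h1 A]
  rfl

noncomputable def nijB (J : Matrix (Fin 2) (Fin 2) ℂ →ₗ[ℝ] Matrix (Fin 2) (Fin 2) ℂ) :
    Matrix (Fin 2) (Fin 2) ℂ →ₗ[ℝ] Matrix (Fin 2) (Fin 2) ℂ →ₗ[ℝ] Matrix (Fin 2) (Fin 2) ℂ :=
  LinearMap.mk₂ ℝ (nijenhuis J)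
    (fun x x' y => by simp only [nijenhuis, add_lie, lie_add, _root_.map_add]; abel)
    (fun c x y => by
      simp only [nijenhuis, smul_lie, lie_smul, _root_.map_smul, smul_add, smul_sub]; try abel)
    (fun x y y' => by simp only [nijenhuis, add_lie, lie_add, _root_.map_add]; abel)
    (fun c x y => by
      simp only [nijenhuis, smul_lie, lie_smul, _root_.map_smul, smul_add, smul_sub]; try abel)

set_option maxHeartbeats 4000000 in
theorem stmt_18
    (J2 J3 : Matrix (Fin 2) (Fin 2) ℂ →ₗ[ℝ] Matrix (Fin 2) (Fin 2) ℂ)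
    (hJ3Z : J3 Zm = Xm) (hJ3X : J3 Xm = -Zm) (hJ3Y : J3 Ym = Wm) (hJ3W : J3 Wm = -Ym)
    (hJ3U : J3 Um = Vm) (hJ3V : J3 Vm = -Um) (hJ3S : J3 Sm = Tm) (hJ3T : J3 Tm = -Sm)
    (hJ2Z : J2 Zm = Wm) (hJ2W : J2 Wm = Zm) (hJ2X : J2 Xm = Ym) (hJ2Y : J2 Ym = Xm)
    (hJ2U : J2 Um = Tm) (hJ2T : J2 Tm = Um) (hJ2V : J2 Vm = Sm) (hJ2S : J2 Sm = Vm)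
    (g : Matrix (Fin 2) (Fin 2) ℂ →ₗ[ℝ] Matrix (Fin 2) (Fin 2) ℂ →ₗ[ℝ] ℝ)
    (hg : ∀ i j : Fin 8, g (e i) (e j) = if i = j then eps i else 0) :
    -- paraquaternionic identities (J₁ := J₃J₂)
    (∀ A : Matrix (Fin 2) (Fin 2) ℂ, J3 (J2 (J3 (J2 A))) = A)
    ∧ (∀ A : Matrix (Fin 2) (Fin 2) ℂ, J2 (J2 A) = A)
    ∧ (∀ A : Matrix (Fin 2) (Fin 2) ℂ, J3 (J3 A) = -A)
    ∧ (∀ A : Matrix (Fin 2) (Fin 2) ℂ, J3 (J2 (J2 A)) = J3 A)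
    ∧ (∀ A : Matrix (Fin 2) (Fin 2) ℂ, J2 (J3 (J2 A)) = -J3 A)
    -- vanishing Nijenhuis tensors
    ∧ (∀ A B : Matrix (Fin 2) (Fin 2) ℂ, nijenhuis (J3 ∘ₗ J2) A B = 0)
    ∧ (∀ A B : Matrix (Fin 2) (Fin 2) ℂ, nijenhuis J2 A B = 0)
    ∧ (∀ A B : Matrix (Fin 2) (Fin 2) ℂ, nijenhuis J3 A B = 0)
    -- g is hyper-parahermitian
    ∧ (∀ A B : Matrix (Fin 2) (Fin 2) ℂ, g (J3 (J2 A)) (J3 (J2 B)) = -g A B)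
    ∧ (∀ A B : Matrix (Fin 2) (Fin 2) ℂ, g (J2 A) (J2 B) = -g A B)
    ∧ (∀ A B : Matrix (Fin 2) (Fin 2) ℂ, g (J3 A) (J3 B) = g A B) := by
  -- values of g on the basis
  have glZZ : g Zm Zm = 1 := by simpa [e, eps] using hg 0 0
  have glZX : g Zm Xm = 0 := by simpa [e, eps] using hg 0 1
  have glZU : g Zm Um = 0 := by simpa [e, eps] using hg 0 2
  have glZV : g Zm Vm = 0 := by simpa [e, eps] using hg 0 3
  have glZY : g Zm Ym = 0 := by simpa [e, eps] using hg 0 4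
  have glZW : g Zm Wm = 0 := by simpa [e, eps] using hg 0 5
  have glZS : g Zm Sm = 0 := by simpa [e, eps] using hg 0 6
  have glZT : g Zm Tm = 0 := by simpa [e, eps] using hg 0 7
  have glXZ : g Xm Zm = 0 := by simpa [e, eps] using hg 1 0
  have glXX : g Xm Xm = 1 := by simpa [e, eps] using hg 1 1
  have glXU : g Xm Um = 0 := by simpa [e, eps] using hg 1 2
  have glXV : g Xm Vm = 0 := by simpa [e, eps] using hg 1 3
  have glXY : g Xm Ym = 0 := by simpa [e, eps] using hg 1 4
  have glXW : g Xm Wm = 0 := by simpa [e, eps] using hg 1 5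
  have glXS : g Xm Sm = 0 := by simpa [e, eps] using hg 1 6
  have glXT : g Xm Tm = 0 := by simpa [e, eps] using hg 1 7
  have glUZ : g Um Zm = 0 := by simpa [e, eps] using hg 2 0
  have glUX : g Um Xm = 0 := by simpa [e, eps] using hg 2 1
  have glUU : g Um Um = 1 := by simpa [e, eps] using hg 2 2
  have glUV : g Um Vm = 0 := by simpa [e, eps] using hg 2 3
  have glUY : g Um Ym = 0 := by simpa [e, eps] using hg 2 4
  have glUW : g Um Wm = 0 := by simpa [e, eps] using hg 2 5
  have glUS : g Um Sm = 0 := by simpa [e, eps] using hg 2 6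
  have glUT : g Um Tm = 0 := by simpa [e, eps] using hg 2 7
  have glVZ : g Vm Zm = 0 := by simpa [e, eps] using hg 3 0
  have glVX : g Vm Xm = 0 := by simpa [e, eps] using hg 3 1
  have glVU : g Vm Um = 0 := by simpa [e, eps] using hg 3 2
  have glVV : g Vm Vm = 1 := by simpa [e, eps] using hg 3 3
  have glVY : g Vm Ym = 0 := by simpa [e, eps] using hg 3 4
  have glVW : g Vm Wm = 0 := by simpa [e, eps] using hg 3 5
  have glVS : g Vm Sm = 0 := by simpa [e, eps] using hg 3 6
  have glVT : g Vm Tm = 0 := by simpa [e, eps] using hg 3 7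
  have glYZ : g Ym Zm = 0 := by simpa [e, eps] using hg 4 0
  have glYX : g Ym Xm = 0 := by simpa [e, eps] using hg 4 1
  have glYU : g Ym Um = 0 := by simpa [e, eps] using hg 4 2
  have glYV : g Ym Vm = 0 := by simpa [e, eps] using hg 4 3
  have glYY : g Ym Ym = (-1) := by simpa [e, eps] using hg 4 4
  have glYW : g Ym Wm = 0 := by simpa [e, eps] using hg 4 5
  have glYS : g Ym Sm = 0 := by simpa [e, eps] using hg 4 6
  have glYT : g Ym Tm = 0 := by simpa [e, eps] using hg 4 7
  have glWZ : g Wm Zm = 0 := by simpa [e, eps] using hg 5 0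
  have glWX : g Wm Xm = 0 := by simpa [e, eps] using hg 5 1
  have glWU : g Wm Um = 0 := by simpa [e, eps] using hg 5 2
  have glWV : g Wm Vm = 0 := by simpa [e, eps] using hg 5 3
  have glWY : g Wm Ym = 0 := by simpa [e, eps] using hg 5 4
  have glWW : g Wm Wm = (-1) := by simpa [e, eps] using hg 5 5
  have glWS : g Wm Sm = 0 := by simpa [e, eps] using hg 5 6
  have glWT : g Wm Tm = 0 := by simpa [e, eps] using hg 5 7
  have glSZ : g Sm Zm = 0 := by simpa [e, eps] using hg 6 0
  have glSX : g Sm Xm = 0 := by simpa [e, eps] using hg 6 1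
  have glSU : g Sm Um = 0 := by simpa [e, eps] using hg 6 2
  have glSV : g Sm Vm = 0 := by simpa [e, eps] using hg 6 3
  have glSY : g Sm Ym = 0 := by simpa [e, eps] using hg 6 4
  have glSW : g Sm Wm = 0 := by simpa [e, eps] using hg 6 5
  have glSS : g Sm Sm = (-1) := by simpa [e, eps] using hg 6 6
  have glST : g Sm Tm = 0 := by simpa [e, eps] using hg 6 7
  have glTZ : g Tm Zm = 0 := by simpa [e, eps] using hg 7 0
  have glTX : g Tm Xm = 0 := by simpa [e, eps] using hg 7 1
  have glTU : g Tm Um = 0 := by simpa [e, eps] using hg 7 2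
  have glTV : g Tm Vm = 0 := by simpa [e, eps] using hg 7 3
  have glTY : g Tm Ym = 0 := by simpa [e, eps] using hg 7 4
  have glTW : g Tm Wm = 0 := by simpa [e, eps] using hg 7 5
  have glTS : g Tm Sm = 0 := by simpa [e, eps] using hg 7 6
  have glTT : g Tm Tm = (-1) := by simpa [e, eps] using hg 7 7
  -- paraquaternionic identities
  have p1 : ∀ A : Matrix (Fin 2) (Fin 2) ℂ, J3 (J2 (J3 (J2 A))) = A := by
    have h0 := key1 ((J3 ∘ₗ J2 ∘ₗ J3 ∘ₗ J2) - LinearMap.id) (fun i => by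
      fin_cases i <;>
        simp [e0, e1, e2, e3, e4, e5, e6, e7, LinearMap.sub_apply, LinearMap.comp_apply, LinearMap.id_apply,
          hJ3Z, hJ3X, hJ3Y, hJ3W, hJ3U, hJ3V, hJ3S, hJ3T, hJ2Z, hJ2W, hJ2X, hJ2Y, hJ2U, hJ2T, hJ2V, hJ2S, _root_.map_neg])
    intro A
    have h := h0 A
    simpa [LinearMap.sub_apply, LinearMap.comp_apply, sub_eq_zero] using h
  have p2 : ∀ A : Matrix (Fin 2) (Fin 2) ℂ, J2 (J2 A) = A := by
    have h0 := key1 ((J2 ∘ₗ J2) - LinearMap.id) (fun i => by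
      fin_cases i <;>
        simp [e0, e1, e2, e3, e4, e5, e6, e7, LinearMap.sub_apply, LinearMap.comp_apply, LinearMap.id_apply,
          hJ3Z, hJ3X, hJ3Y, hJ3W, hJ3U, hJ3V, hJ3S, hJ3T, hJ2Z, hJ2W, hJ2X, hJ2Y, hJ2U, hJ2T, hJ2V, hJ2S, _root_.map_neg])
    intro A
    have h := h0 A
    simpa [LinearMap.sub_apply, LinearMap.comp_apply, sub_eq_zero] using h
  have p3 : ∀ A : Matrix (Fin 2) (Fin 2) ℂ, J3 (J3 A) = -A := by
    have h0 := key1 ((J3 ∘ₗ J3) + LinearMap.id) (fun i => by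
      fin_cases i <;>
        simp [e0, e1, e2, e3, e4, e5, e6, e7, LinearMap.add_apply, LinearMap.comp_apply, LinearMap.id_apply,
          hJ3Z, hJ3X, hJ3Y, hJ3W, hJ3U, hJ3V, hJ3S, hJ3T, hJ2Z, hJ2W, hJ2X, hJ2Y, hJ2U, hJ2T, hJ2V, hJ2S, _root_.map_neg])
    intro A
    have h := h0 A
    simp only [LinearMap.add_apply, LinearMap.comp_apply, LinearMap.id_apply] at h
    exact eq_neg_of_add_eq_zero_left h
  have p5 : ∀ A : Matrix (Fin 2) (Fin 2) ℂ, J2 (J3 (J2 A)) = -J3 A := by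
    have h0 := key1 ((J2 ∘ₗ J3 ∘ₗ J2) + J3) (fun i => by
      fin_cases i <;>
        simp [e0, e1, e2, e3, e4, e5, e6, e7, LinearMap.add_apply, LinearMap.comp_apply,
          hJ3Z, hJ3X, hJ3Y, hJ3W, hJ3U, hJ3V, hJ3S, hJ3T, hJ2Z, hJ2W, hJ2X, hJ2Y, hJ2U, hJ2T, hJ2V, hJ2S, _root_.map_neg])
    intro A
    have h := h0 A
    simp only [LinearMap.add_apply, LinearMap.comp_apply] at h
    exact eq_neg_of_add_eq_zero_left h
  -- Nijenhuis tensors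
  have nj : ∀ (J : Matrix (Fin 2) (Fin 2) ℂ →ₗ[ℝ] Matrix (Fin 2) (Fin 2) ℂ),
      (∀ i j : Fin 8, nijenhuis J (e i) (e j) = 0) →
      ∀ A B, nijenhuis J A B = 0 := by
    intro J h A B
    have h1 := key2 (nijB J) (fun i j => by
      simpa [nijB, LinearMap.mk₂_apply] using h i j) A B
    simpa [nijB, LinearMap.mk₂_apply] using h1
  have n1 : ∀ A B, nijenhuis (J3 ∘ₗ J2) A B = 0 := nj (J3 ∘ₗ J2) (fun i j => by
    fin_cases i <;> fin_cases j <;>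
      simp [nijenhuis, e0, e1, e2, e3, e4, e5, e6, e7, LinearMap.comp_apply, lZl, lZr, lUl, lUr, lXX, lXY, lXW, lXV, lXS, lXT, lYX, lYY, lYW, lYV, lYS, lYT, lWX, lWY, lWW, lWV, lWS, lWT, lVX, lVY, lVW, lVV, lVS, lVT, lSX, lSY, lSW, lSV, lSS, lST, lTX, lTY, lTW, lTV, lTS, lTT,
        hJ3Z, hJ3X, hJ3Y, hJ3W, hJ3U, hJ3V, hJ3S, hJ3T, hJ2Z, hJ2W, hJ2X, hJ2Y, hJ2U, hJ2T, hJ2V, hJ2S, _root_.map_smul, _root_.map_neg, _root_.map_zero, neg_lie, lie_neg, smul_lie, lie_smul,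
        smul_neg, smul_smul, lie_self] <;> module)
  have n2 : ∀ A B, nijenhuis J2 A B = 0 := nj J2 (fun i j => by
    fin_cases i <;> fin_cases j <;>
      simp [nijenhuis, e0, e1, e2, e3, e4, e5, e6, e7, lZl, lZr, lUl, lUr, lXX, lXY, lXW, lXV, lXS, lXT, lYX, lYY, lYW, lYV, lYS, lYT, lWX, lWY, lWW, lWV, lWS, lWT, lVX, lVY, lVW, lVV, lVS, lVT, lSX, lSY, lSW, lSV, lSS, lST, lTX, lTY, lTW, lTV, lTS, lTT,
        hJ3Z, hJ3X, hJ3Y, hJ3W, hJ3U, hJ3V, hJ3S, hJ3T, hJ2Z, hJ2W, hJ2X, hJ2Y, hJ2U, hJ2T, hJ2V, hJ2S, _root_.map_smul, _root_.map_neg, _root_.map_zero, neg_lie, lie_neg, smul_lie, lie_smul,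
        smul_neg, smul_smul, lie_self] <;> module)
  have n3 : ∀ A B, nijenhuis J3 A B = 0 := nj J3 (fun i j => by
    fin_cases i <;> fin_cases j <;>
      simp [nijenhuis, e0, e1, e2, e3, e4, e5, e6, e7, lZl, lZr, lUl, lUr, lXX, lXY, lXW, lXV, lXS, lXT, lYX, lYY, lYW, lYV, lYS, lYT, lWX, lWY, lWW, lWV, lWS, lWT, lVX, lVY, lVW, lVV, lVS, lVT, lSX, lSY, lSW, lSV, lSS, lST, lTX, lTY, lTW, lTV, lTS, lTT,
        hJ3Z, hJ3X, hJ3Y, hJ3W, hJ3U, hJ3V, hJ3S, hJ3T, hJ2Z, hJ2W, hJ2X, hJ2Y, hJ2U, hJ2T, hJ2V, hJ2S, _root_.map_smul, _root_.map_neg, _root_.map_zero, neg_lie, lie_neg, smul_lie, lie_smul,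
        smul_neg, smul_smul, lie_self] <;> module)
  -- hyper-parahermitian conditions
  have q1 : ∀ A B, g (J3 (J2 A)) (J3 (J2 B)) = -g A B := by
    have h0 := key2 (g.compl₁₂ (J3 ∘ₗ J2) (J3 ∘ₗ J2) + g) (fun i j => by
      fin_cases i <;> fin_cases j <;>
        simp [e0, e1, e2, e3, e4, e5, e6, e7, LinearMap.add_apply, LinearMap.compl₁₂_apply, LinearMap.comp_apply,
          hJ3Z, hJ3X, hJ3Y, hJ3W, hJ3U, hJ3V, hJ3S, hJ3T, hJ2Z, hJ2W, hJ2X, hJ2Y, hJ2U, hJ2T, hJ2V, hJ2S, _root_.map_neg, LinearMap.neg_apply, glZZ, glZX, glZU, glZV, glZY, glZW, glZS, glZT, glXZ, glXX, glXU, glXV, glXY, glXW, glXS, glXT, glUZ, glUX, glUU, glUV, glUY, glUW, glUS, glUT, glVZ, glVX, glVU, glVV, glVY, glVW, glVS, glVT, glYZ, glYX, glYU, glYV, glYY, glYW, glYS, glYT, glWZ, glWX, glWU, glWV, glWY, glWW, glWS, glWT, glSZ, glSX, glSU, glSV, glSY, glSW, glSS, glST, glTZ, glTX, glTU, glTV,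 glTY, glTW, glTS, glTT])
    intro A B
    have h := h0 A B
    simp only [LinearMap.add_apply, LinearMap.compl₁₂_apply, LinearMap.comp_apply] at h
    exact eq_neg_of_add_eq_zero_left h
  have q2 : ∀ A B, g (J2 A) (J2 B) = -g A B := by
    have h0 := key2 (g.compl₁₂ J2 J2 + g) (fun i j => by
      fin_cases i <;> fin_cases j <;>
        simp [e0, e1, e2, e3, e4, e5, e6, e7, LinearMap.add_apply, LinearMap.compl₁₂_apply,
          hJ3Z, hJ3X, hJ3Y, hJ3W, hJ3U, hJ3V, hJ3S, hJ3T, hJ2Z, hJ2W, hJ2X, hJ2Y, hJ2U, hJ2T, hJ2V, hJ2S, _root_.map_neg, LinearMap.neg_apply, glZZ, glZX, glZU, glZV, glZY, glZW, glZS, glZT, glXZ, glXX, glXU, glXV, glXY, glXW, glXS, glXT, glUZ, glUX, glUU, glUV, glUY, glUW, glUS, glUT, glVZ, glVX, glVU, glVV, glVY, glVW, glVS, glVT, glYZ, glYX, glYU, glYV, glYY, glYW, glYS, glYT, glWZ, glWX, glWU, glWV, glWY, glWW, glWS, glWT, glSZ, glSX, glSU, glSV, glSY, glSW, glSS, glST,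 glTZ, glTX, glTU, glTV, glTY, glTW, glTS, glTT])
    intro A B
    have h := h0 A B
    simp only [LinearMap.add_apply, LinearMap.compl₁₂_apply] at h
    exact eq_neg_of_add_eq_zero_left h
  have q3 : ∀ A B, g (J3 A) (J3 B) = g A B := by
    have h0 := key2 (g.compl₁₂ J3 J3 - g) (fun i j => by
      fin_cases i <;> fin_cases j <;>
        simp [e0, e1, e2, e3, e4, e5, e6, e7, LinearMap.sub_apply, LinearMap.compl₁₂_apply,
          hJ3Z, hJ3X, hJ3Y, hJ3W, hJ3U, hJ3V, hJ3S, hJ3T, hJ2Z, hJ2W, hJ2X, hJ2Y, hJ2U, hJ2T, hJ2V, hJ2S, _root_.map_neg, LinearMap.neg_apply, glZZ, glZX, glZU, glZV, glZY, glZW, glZS, glZT, glXZ, glXX, glXU, glXV, glXY, glXW, glXS, glXT, glUZ, glUX, glUU, glUV, glUY, glUW, glUS, glUT, glVZ, glVX, glVU, glVV, glVY, glVW, glVS, glVT, glYZ, glYX, glYU, glYV, glYY, glYW, glYS, glYT, glWZ, glWX, glWU, glWV, glWY, glWW, glWS, glWT, glSZ, glSX, glSU, glSV, glSY, glSW, glSS,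 glST, glTZ, glTX, glTU, glTV, glTY, glTW, glTS, glTT])
    intro A B
    have h := h0 A B
    simpa [LinearMap.sub_apply, LinearMap.compl₁₂_apply, sub_eq_zero] using h
  exact ⟨p1, p2, p3, fun A => by rw [p2 A], p5, n1, n2, n3, q1, q2, q3⟩
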